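/- arXiv:2409.00386 — 2 statements merged into one kernel-verified Lean document; each statement's English description precedes it below -/
import Mathlib

section
/- Let a > 0 and let u : [0,a] → ℝ be continuously differentiable with u(0) = 0. Then for every r ∈ [0,a], u(r)² ≤ ∫₀ᵃ (u'(s) + u(s)/s)² s ds. In particular, sup_{r∈[0,a]} |u(r)|² is bounded by the squared L² norm (with weight s) of the radial divergence u' + u/s. -/
open MeasureTheory Set

theorem stmt0 (a : ℝ) (ha : 0 < a) (u u' : ℝ → ℝ)
    (hderiv : ∀ s ∈ Icc (0:ℝ) a, HasDerivAt u (u' s) s)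
    (hcont : ContinuousOn u' (Icc (0:ℝ) a))
    (hu0 : u 0 = 0)
    (hint : IntervalIntegrable (fun s => (u' s + u s / s)^2 * s) volume 0 a) :
    ∀ r ∈ Icc (0:ℝ) a, (u r)^2 ≤ ∫ s in (0:ℝ)..a, (u' s + u s / s)^2 * s := by
  intro r hr
  obtain ⟨hr0, hra⟩ := hr
  have hsub : Icc (0:ℝ) r ⊆ Icc 0 a := Icc_subset_Icc le_rfl hra
  have hucont : ContinuousOn u (Icc 0 a) := fun s hs =>
    (hderiv s hs).continuousAt.continuousWithinAt
  have hg : IntervalIntegrable (fun s => 2 * (u s * u' s)) volume 0 r := by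
    apply ContinuousOn.intervalIntegrable
    rw [uIcc_of_le hr0]
    exact continuousOn_const.mul ((hucont.mono hsub).mul (hcont.mono hsub))
  have hint1 : IntervalIntegrable (fun s => (u' s + u s / s)^2 * s) volume 0 r :=
    hint.mono_set (by rw [uIcc_of_le hr0, uIcc_of_le (le_trans hr0 hra)]; exact hsub)
  have hint2 : IntervalIntegrable (fun s => (u' s + u s / s)^2 * s) volume r a :=
    hint.mono_set (by
      rw [uIcc_of_le hra, uIcc_of_le (le_trans hr0 hra)]
      exact Icc_subset_Icc hr0 le_rfl)
  have hftc : ∫ s in (0:ℝ)..r, 2 * (u s * u' s) = u r ^ 2 := by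
    have h := intervalIntegral.integral_eq_sub_of_hasDerivAt (f := fun s => u s ^ 2)
      (f' := fun s => 2 * (u s * u' s)) (a := 0) (b := r) ?_ hg
    · rw [h]; simp [hu0]
    · intro s hs
      rw [uIcc_of_le hr0] at hs
      have h2 := (hderiv s (hsub hs)).fun_pow 2
      refine h2.congr_deriv ?_
      rw [show (2:ℕ) - 1 = 1 by norm_num]
      push_cast
      ring
  have hmono : ∫ s in (0:ℝ)..r, 2 * (u s * u' s)
      ≤ ∫ s in (0:ℝ)..r, (u' s + u s / s)^2 * s := by
    apply intervalIntegral.integral_mono_on hr0 hg hint1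
    intro s hs
    rcases eq_or_lt_of_le hs.1 with h0 | h0
    · simp [← h0, hu0]
    · have hkey : (u' s + u s / s)^2 * s
          = (u' s)^2 * s + 2 * (u s * u' s) + (u s)^2 / s := by
        field_simp
        ring
      rw [hkey]
      have hp : 0 ≤ (u' s)^2 * s + (u s)^2 / s := by positivity
      linarith
  have hnn : 0 ≤ ∫ s in r..a, (u' s + u s / s)^2 * s := by
    apply intervalIntegral.integral_nonneg hra
    intro s hs
    have hs0 : 0 ≤ s := le_trans hr0 hs.1
    positivity
  have hsplit : ∫ s in (0:ℝ)..a, (u' s + u s / s)^2 * s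
      = (∫ s in (0:ℝ)..r, (u' s + u s / s)^2 * s)
        + ∫ s in r..a, (u' s + u s / s)^2 * s :=
    (intervalIntegral.integral_add_adjacent_intervals hint1 hint2).symm
  rw [hsplit]
  have hfin := hftc ▸ hmono
  linarith
end

section
/- Let α ≥ 0 and A : [0,∞) → (0,∞) continuous. Suppose there is a constant C > 0 such that A(t)^{-α} ≤ C (1+t)^{-2} (1+t + ∫₀ᵗ A(s) ds) for all t ≥ 0. Then the running maximum A_M(t) := sup_{s∈[0,t]} A(s) satisfies A_M(t) ≥ c (1+t)^{1/(1+α)} for all t ≥ 0, for some constant c > 0 depending on C and α. -/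
open MeasureTheory Set

theorem stmt5 (α : ℝ) (hα : 0 ≤ α) (A : ℝ → ℝ) (hA : Continuous A)
    (hApos : ∀ t, 0 < A t) (C : ℝ) (hC : 0 < C)
    (h : ∀ t ≥ (0:ℝ),
      (A t) ^ (-α) ≤ C * (1 + t) ^ (-(2:ℝ)) * (1 + t + ∫ s in (0:ℝ)..t, A s)) :
    ∃ c > 0, ∀ t ≥ (0:ℝ), c * (1 + t) ^ (1 / (1 + α)) ≤ sSup (A '' Icc 0 t) := by
  have h1α : (0:ℝ) < 1 + α := by linarith
  have hA0 : 0 < A 0 := hApos 0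
  set β : ℝ := 1 / (1 + α) with hβ
  have hβpos : 0 < β := by positivity
  refine ⟨(C ^ β * (1 / A 0 + 1))⁻¹, by positivity, ?_⟩
  intro t ht
  set M := sSup (A '' Icc 0 t) with hM
  have hbdd : BddAbove (A '' Icc 0 t) := (isCompact_Icc.image hA).bddAbove
  have hA0M : A 0 ≤ M := le_csSup hbdd (mem_image_of_mem _ (left_mem_Icc.mpr ht))
  have hAtM : A t ≤ M := le_csSup hbdd (mem_image_of_mem _ (right_mem_Icc.mpr ht))
  have hMpos : 0 < M := lt_of_lt_of_le hA0 hA0M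
  have h1t : (0:ℝ) < 1 + t := by linarith
  have hint : ∫ s in (0:ℝ)..t, A s ≤ t * M := by
    have := intervalIntegral.integral_mono_on ht (hA.intervalIntegrable 0 t)
      (intervalIntegrable_const (c := M) (μ := volume))
      (fun s hs => le_csSup hbdd (mem_image_of_mem _ hs))
    simpa using this
  have hpow2 : (1 + t) ^ (-(2:ℝ)) = ((1 + t) * (1 + t))⁻¹ := by
    rw [Real.rpow_neg h1t.le]
    congr 1
    rw [show ((2:ℝ)) = ((2:ℕ):ℝ) by norm_num, Real.rpow_natCast]
    ring
  have step1 : (A t) ^ (-α) ≤ C * (1 + M) / (1 + t) := by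
    refine (h t ht).trans ?_
    rw [hpow2]
    rw [div_eq_mul_inv]
    have hle : 1 + t + ∫ s in (0:ℝ)..t, A s ≤ (1 + t) * (1 + M) := by
      nlinarith [hint, hMpos, ht]
    calc C * ((1+t)*(1+t))⁻¹ * (1 + t + ∫ s in (0:ℝ)..t, A s)
        ≤ C * ((1+t)*(1+t))⁻¹ * ((1+t)*(1+M)) := by
          apply mul_le_mul_of_nonneg_left hle (by positivity)
      _ = C * (1 + M) * (1+t)⁻¹ := by field_simp
  have step2 : M ^ (-α) ≤ (A t) ^ (-α) :=
    Real.rpow_le_rpow_of_nonpos (hApos t) hAtM (by linarith)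
  have step3 : 1 + t ≤ C * (1 + M) * M ^ α := by
    have h1 : (1 + t) * M ^ (-α) ≤ C * (1 + M) := by
      have := step2.trans step1
      rw [div_eq_mul_inv] at this
      calc (1 + t) * M ^ (-α) ≤ (1 + t) * (C * (1+M) * (1+t)⁻¹) := by
            apply mul_le_mul_of_nonneg_left this h1t.le
        _ = C * (1 + M) := by field_simp
    have hMα : (0:ℝ) < M ^ α := Real.rpow_pos_of_pos hMpos α
    have hinv : M ^ (-α) = (M ^ α)⁻¹ := Real.rpow_neg hMpos.le α
    rw [hinv] at h1
    calc 1 + t = (1 + t) * (M ^ α)⁻¹ * M ^ α := by field_simp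
      _ ≤ C * (1 + M) * M ^ α := by
          apply mul_le_mul_of_nonneg_right h1 hMα.le
  have step4 : 1 + t ≤ C * (1 + M) ^ (1 + α) := by
    have hMle : M ^ α ≤ (1 + M) ^ α := Real.rpow_le_rpow hMpos.le (by linarith) hα
    have heq : (1 + M) ^ (1 + α) = (1 + M) * (1 + M) ^ α := by
      rw [Real.rpow_add (by linarith), Real.rpow_one]
    rw [heq]
    calc 1 + t ≤ C * (1 + M) * M ^ α := step3
      _ ≤ C * (1 + M) * (1 + M) ^ α := by
          apply mul_le_mul_of_nonneg_left hMle (by positivity)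
      _ = C * ((1 + M) * (1 + M) ^ α) := by ring
  have step5 : (1 + t) ^ β ≤ C ^ β * (1 + M) := by
    have h1M : (0:ℝ) ≤ 1 + M := by linarith
    have := Real.rpow_le_rpow h1t.le step4 hβpos.le
    rwa [Real.mul_rpow hC.le (by positivity), ← Real.rpow_mul h1M,
      mul_one_div, div_self h1α.ne', Real.rpow_one] at this
  rw [inv_mul_le_iff₀ (by positivity)]
  calc (1 + t) ^ β ≤ C ^ β * (1 + M) := step5
    _ ≤ C ^ β * ((1 / A 0 + 1) * M) := by
        apply mul_le_mul_of_nonneg_left _ (by positivity)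
        have : 1 ≤ M / A 0 := (one_le_div hA0).mpr hA0M
        rw [div_eq_mul_inv] at this
        rw [one_div]
        nlinarith [hMpos, this]
    _ = C ^ β * (1 / A 0 + 1) * M := by ring
end
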